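/- Let 0 < μ < 1, let (w_k) with w_k = (k+1)^{1-μ} - k^{1-μ}, and let (ζ_n) be a sequence of complex numbers satisfying |ζ_{n+1}| ≤ |ζ_n - ∑_{k=1}^{n} w_k (ζ_{n-k+1} - ζ_{n-k})| for all n ≥ 0. Then |ζ_n| ≤ |ζ_0| for all n ≥ 0. -/

import Mathlib

lemma abel_key (w : ℕ → ℝ) (hw0 : w 0 = 1) (ζ : ℕ → ℂ) (n : ℕ) :
    ζ n - ∑ k ∈ Finset.Icc 1 n, (w k : ℂ) * (ζ (n - k + 1) - ζ (n - k))
      = ∑ k ∈ Finset.range n, ((w k - w (k + 1) : ℝ) : ℂ) * ζ (n - k) + (w n : ℂ) * ζ 0 := by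
  have h1 : ∑ k ∈ Finset.Icc 1 n, (w k : ℂ) * (ζ (n - k + 1) - ζ (n - k))
      = ∑ k ∈ Finset.range n, (w (k + 1) : ℂ) * (ζ (n - k) - ζ (n - (k + 1))) := by
    rw [← Finset.Ico_add_one_right_eq_Icc, Finset.sum_Ico_eq_sum_range]
    refine Finset.sum_congr rfl fun k hk => ?_
    have hk' : k < n := Finset.mem_range.mp hk
    have : n - (1 + k) + 1 = n - k := by omega
    rw [add_comm 1 k] at this ⊢
    rw [this]
  rw [h1]
  have h2 : ∑ k ∈ Finset.range n, (w (k + 1) : ℂ) * ζ (n - (k + 1))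
      = ∑ j ∈ Finset.range n, (w j : ℂ) * ζ (n - j) + (w n : ℂ) * ζ 0 - (w 0 : ℂ) * ζ n := by
    have := Finset.sum_range_succ' (fun j => (w j : ℂ) * ζ (n - j)) n
    rw [Finset.sum_range_succ] at this
    simp only [Nat.sub_self, Nat.sub_zero] at this
    linear_combination -this
  simp only [mul_sub, Finset.sum_sub_distrib] at *
  rw [h2, hw0]
  push_cast
  simp only [sub_mul, Finset.sum_sub_distrib]
  ring

theorem zeta_bound_complex (μ : ℝ) (hμ0 : 0 < μ) (hμ1 : μ < 1)
    (w : ℕ → ℝ) (hw : ∀ k : ℕ, w k = ((k : ℝ) + 1) ^ (1 - μ) - (k : ℝ) ^ (1 - μ))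
    (ζ : ℕ → ℂ)
    (hζ : ∀ n : ℕ, ‖ζ (n + 1)‖ ≤
      ‖ζ n - ∑ k ∈ Finset.Icc 1 n, (w k : ℂ) * (ζ (n - k + 1) - ζ (n - k))‖) :
    ∀ n : ℕ, ‖ζ n‖ ≤ ‖ζ 0‖ := by
  set p := 1 - μ with hp
  have hp0 : 0 < p := by linarith
  have hp1 : p < 1 := by linarith
  have hw0 : w 0 = 1 := by
    rw [hw]; simp [Real.zero_rpow hp0.ne']
  have hpos : ∀ k, 0 ≤ w k := by
    intro k
    rw [hw]
    have : (k : ℝ) ^ p ≤ ((k : ℝ) + 1) ^ p :=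
      Real.rpow_le_rpow (Nat.cast_nonneg k) (by linarith) hp0.le
    linarith
  have hdec : ∀ k, w (k + 1) ≤ w k := by
    intro k
    have hc : (1/2 : ℝ) * (k : ℝ) ^ p + (1/2 : ℝ) * ((k : ℝ) + 2) ^ p ≤ ((k : ℝ) + 1) ^ p := by
      have h := (Real.concaveOn_rpow hp0.le hp1.le).2
        (Set.mem_Ici.mpr (Nat.cast_nonneg k))
        (Set.mem_Ici.mpr (show (0:ℝ) ≤ (k : ℝ) + 2 by positivity))
        (show (0:ℝ) ≤ 1/2 by norm_num) (show (0:ℝ) ≤ 1/2 by norm_num) (by norm_num)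
      simp only [smul_eq_mul] at h
      rw [show (1/2 : ℝ) * (k : ℝ) + 1/2 * ((k : ℝ) + 2) = (k : ℝ) + 1 by ring] at h
      linarith
    rw [hw k, hw (k + 1)]
    push_cast
    rw [show ((k : ℝ) + 1 + 1) = (k : ℝ) + 2 by ring]
    linarith
  intro n
  induction n using Nat.strong_induction_on with
  | _ n ih =>
    match n with
    | 0 => exact le_refl _
    | Nat.succ m =>
      refine (hζ m).trans ?_
      rw [abel_key w hw0 ζ m]
      calc ‖∑ k ∈ Finset.range m, ((w k - w (k + 1) : ℝ) : ℂ) * ζ (m - k)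
            + (w m : ℂ) * ζ 0‖
          ≤ (∑ k ∈ Finset.range m, (w k - w (k + 1)) * ‖ζ (m - k)‖)
            + w m * ‖ζ 0‖ := by
            refine (norm_add_le _ _).trans ?_
            gcongr
            · refine (norm_sum_le _ _).trans_eq
                (Finset.sum_congr rfl fun k _ => ?_)
              rw [norm_mul, Complex.norm_real, Real.norm_eq_abs, abs_of_nonneg (sub_nonneg.mpr (hdec k))]
            · rw [norm_mul, Complex.norm_real, Real.norm_eq_abs, abs_of_nonneg (hpos m)]
        _ ≤ (∑ k ∈ Finset.range m, (w k - w (k + 1)) * ‖ζ 0‖)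
            + w m * ‖ζ 0‖ := by
            gcongr with k hk
            · exact sub_nonneg.mpr (hdec k)
            · exact ih (m - k) (by have := Finset.mem_range.mp hk; omega)
        _ = ‖ζ 0‖ := by
            rw [← Finset.sum_mul, Finset.sum_range_sub' w, hw0]
            ring
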